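/- Let q be a self-join-free Boolean conjunctive query and F an atom of q with zero indegree in the attack graph of q. Let x⃗ enumerate key(F). For every uncertain database db, q is true in every repair of db if and only if there exists a tuple a⃗ of constants from the active domain of db such that q[x⃗→a⃗] is true in every repair of db. -/

import Mathlib

/-- A fact `R(a₁,…,aₙ)`: relation name, primary-key values, non-key values. -/
structure DBFact where
  rel : ℕ
  key : List ℕ
  rest : List ℕ
deriving DecidableEq

/-- Two facts are key-equal if they have the same relation name and primary-key value. -/
def keyEq (A B : DBFact) : Prop := A.rel = B.rel ∧ A.key = B.key

instance (A B : DBFact) : Decidable (keyEq A B) :=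
  inferInstanceAs (Decidable (_ ∧ _))

/-- A set of facts is consistent if it contains no two distinct key-equal facts. -/
def Consistent (s : Finset DBFact) : Prop := ∀ A ∈ s, ∀ B ∈ s, keyEq A B → A = B

/-- A repair of `db` is a maximal (w.r.t. ⊆) consistent subset of `db`. -/
def Repair (db r : Finset DBFact) : Prop :=
  r ⊆ db ∧ Consistent r ∧ ∀ r', r' ⊆ db → Consistent r' → r ⊆ r' → r = r'

/-- A term is a variable (inl) or a constant (inr). -/
abbrev Term := ℕ ⊕ ℕ

/-- An atom `R(t₁,…,tₙ)` with key positions and non-key positions. -/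
structure Atom where
  rel : ℕ
  key : List Term
  rest : List Term
deriving DecidableEq

def termVars (l : List Term) : Finset ℕ := (l.filterMap fun t => t.getLeft?).toFinset

/-- Variables at primary-key positions of an atom. -/
def keyVars (F : Atom) : Finset ℕ := termVars F.key

/-- All variables of an atom. -/
def atomVars (F : Atom) : Finset ℕ := termVars F.key ∪ termVars F.rest

/-- A query (finite set of atoms) is self-join-free: no relation name occurs twice. -/
def SJF (q : Finset Atom) : Prop := ∀ F ∈ q, ∀ G ∈ q, F.rel = G.rel → F = G

/-- Apply a valuation (total map from variables to constants) to an atom, yielding a fact. -/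
def applyVal (θ : ℕ → ℕ) (F : Atom) : DBFact :=
  ⟨F.rel, F.key.map (Sum.elim θ id), F.rest.map (Sum.elim θ id)⟩

/-- Semantic implication of a functional dependency `X → Y` by a set of FDs
(two-tuple semantics, which is equivalent to the standard one for FDs). -/
def FDImplies (fds : Set (Set ℕ × Set ℕ)) (X Y : Set ℕ) : Prop :=
  ∀ θ μ : ℕ → ℕ,
    (∀ p ∈ fds, (∀ v ∈ p.1, θ v = μ v) → ∀ v ∈ p.2, θ v = μ v) →
    (∀ v ∈ X, θ v = μ v) → ∀ v ∈ Y, θ v = μ v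

/-- `FD(q) = { key(F) → vars(F) : F ∈ q }`. -/
def FDs (q : Finset Atom) : Set (Set ℕ × Set ℕ) :=
  {p | ∃ F ∈ q, p = ((keyVars F : Set ℕ), (atomVars F : Set ℕ))}

/-- `F⁺ = { x : FD(q \ {F}) ⊨ key(F) → x }`. -/
def plus (q : Finset Atom) (F : Atom) : Set ℕ :=
  {x | FDImplies (FDs (q.erase F)) (keyVars F : Set ℕ) {x}}

/-- One step of a witness for an attack by `F`: consecutive atoms share a variable outside `F⁺`. -/
def AttackStep (q : Finset Atom) (F : Atom) (A B : Atom) : Prop :=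
  ¬ ((atomVars A ∩ atomVars B : Finset ℕ) : Set ℕ) ⊆ plus q F

/-- `F` attacks `G` in the attack graph of `q`. -/
def Attacks (q : Finset Atom) (F G : Atom) : Prop :=
  F ≠ G ∧ F ∈ q ∧ ∃ L : List Atom, (∀ A ∈ L, A ∈ q) ∧
    List.Chain (AttackStep q F) F L ∧ (F :: L).getLast (List.cons_ne_nil F L) = G

/-- `F` attacks the variable `z`. -/
def AttacksVar (q : Finset Atom) (F : Atom) (z : ℕ) : Prop :=
  z ∉ plus q F ∧ F ∈ q ∧ ∃ L : List Atom, (∀ A ∈ L, A ∈ q) ∧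
    List.Chain (AttackStep q F) F L ∧ z ∈ atomVars ((F :: L).getLast (List.cons_ne_nil F L))

/-- `r ⊨ ζ(q)` for a valuation `ζ` over the variable set `X`. -/
def Sat (r : Finset DBFact) (q : Finset Atom) (X : Finset ℕ) (ζ : ℕ → ℕ) : Prop :=
  ∃ θ : ℕ → ℕ, (∀ v ∈ X, θ v = ζ v) ∧ ∀ F ∈ q, applyVal θ F ∈ r

/-- `r ⊨ q`. -/
def Sat0 (r : Finset DBFact) (q : Finset Atom) : Prop :=
  ∃ θ : ℕ → ℕ, ∀ F ∈ q, applyVal θ F ∈ r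

/-- A fact `A` is relevant for `q` in `r` if `A ∈ θ(q) ⊆ r` for some valuation `θ`. -/
def Relevant (A : DBFact) (q : Finset Atom) (r : Finset DBFact) : Prop :=
  ∃ θ : ℕ → ℕ, (∃ F ∈ q, applyVal θ F = A) ∧ ∀ F ∈ q, applyVal θ F ∈ r

/-- The active domain of a database: the constants occurring in its facts. -/
def adom (db : Finset DBFact) : Set ℕ :=
  {c | ∃ A ∈ db, c ∈ A.key ∨ c ∈ A.rest}

open scoped Classical

lemma keyEq_refl (A : DBFact) : keyEq A A := ⟨rfl, rfl⟩
lemma keyEq_symm {A B : DBFact} (h : keyEq A B) : keyEq B A := ⟨h.1.symm, h.2.symm⟩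
lemma keyEq_trans {A B C : DBFact} (h1 : keyEq A B) (h2 : keyEq B C) : keyEq A C :=
  ⟨h1.1.trans h2.1, h1.2.trans h2.2⟩

lemma mem_termVars {v : ℕ} {l : List Term} : v ∈ termVars l ↔ Sum.inl v ∈ l := by
  simp only [termVars, List.mem_toFinset, List.mem_filterMap]
  constructor
  · rintro ⟨t, ht, h⟩; cases t with
    | inl a => simp [Sum.getLeft?] at h; subst h; exact ht
    | inr b => simp [Sum.getLeft?] at h
  · intro h; exact ⟨_, h, rfl⟩

lemma map_elim_congr {θ μ : ℕ → ℕ} {l : List Term} (h : ∀ v ∈ termVars l, θ v = μ v) :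
    l.map (Sum.elim θ id) = l.map (Sum.elim μ id) := by
  apply List.map_congr_left
  intro t ht
  cases t with
  | inl v => simpa using h v (mem_termVars.2 ht)
  | inr c => rfl

lemma map_elim_agree {θ μ : ℕ → ℕ} : ∀ {l : List Term},
    l.map (Sum.elim θ id) = l.map (Sum.elim μ id) → ∀ v ∈ termVars l, θ v = μ v := by
  intro l
  induction l with
  | nil => intro _ v hv; simp [termVars] at hv
  | cons t l ih =>
    intro h v hv
    simp only [List.map_cons, List.cons.injEq] at h
    rcases List.mem_filterMap.1 (List.mem_toFinset.1 hv) with ⟨t', ht', hg⟩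
    rcases List.mem_cons.1 ht' with rfl | ht'
    · cases t' with
      | inl a => simp [Sum.getLeft?] at hg; subst hg; simpa using h.1
      | inr b => simp [Sum.getLeft?] at hg
    · exact ih h.2 v (List.mem_toFinset.2 (List.mem_filterMap.2 ⟨t', ht', hg⟩))

lemma applyVal_congr {θ μ : ℕ → ℕ} {H : Atom} (h : ∀ v ∈ atomVars H, θ v = μ v) :
    applyVal θ H = applyVal μ H := by
  have h1 : ∀ v ∈ termVars H.key, θ v = μ v := fun v hv => h v (Finset.mem_union_left _ hv)
  have h2 : ∀ v ∈ termVars H.rest, θ v = μ v := fun v hv => h v (Finset.mem_union_right _ hv)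
  simp [applyVal, map_elim_congr h1, map_elim_congr h2]

lemma applyVal_agree {θ μ : ℕ → ℕ} {H : Atom} (h : applyVal θ H = applyVal μ H) :
    ∀ v ∈ atomVars H, θ v = μ v := by
  simp only [applyVal, DBFact.mk.injEq] at h
  intro v hv
  rcases Finset.mem_union.1 hv with hv | hv
  · exact map_elim_agree h.2.1 v hv
  · exact map_elim_agree h.2.2 v hv

lemma keyEq_applyVal_of_agree {θ μ : ℕ → ℕ} {H : Atom} (h : ∀ v ∈ keyVars H, θ v = μ v) :
    keyEq (applyVal θ H) (applyVal μ H) := ⟨rfl, map_elim_congr h⟩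

lemma agree_of_key_eq {θ μ : ℕ → ℕ} {H : Atom}
    (h : (applyVal θ H).key = (applyVal μ H).key) : ∀ v ∈ keyVars H, θ v = μ v :=
  map_elim_agree h

lemma keyVars_subset_plus {q : Finset Atom} {F : Atom} {z : ℕ} (hz : z ∈ keyVars F) :
    z ∈ plus q F := by
  intro θ μ _ hX v hv
  rcases hv with rfl
  exact hX v (Finset.mem_coe.2 hz)

lemma plus_agree {q : Finset Atom} {G : Atom} {r : Finset DBFact} (hr : Consistent r)
    {θ μ : ℕ → ℕ} (hθ : ∀ H ∈ q.erase G, applyVal θ H ∈ r)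
    (hμ : ∀ H ∈ q.erase G, applyVal μ H ∈ r)
    (hk : ∀ v ∈ keyVars G, θ v = μ v) {z : ℕ} (hz : z ∈ plus q G) : θ z = μ z := by
  refine hz θ μ ?_ (fun v hv => hk v (Finset.mem_coe.1 hv)) z rfl
  rintro ⟨X, Y⟩ ⟨H, hH, heq⟩ hagree v hv
  simp only [Prod.mk.injEq] at heq
  obtain ⟨hX, hY⟩ := heq
  subst hX; subst hY
  have e : applyVal θ H = applyVal μ H :=
    hr _ (hθ H hH) _ (hμ H hH) (keyEq_applyVal_of_agree (fun w hw => hagree w (Finset.mem_coe.2 hw)))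
  exact applyVal_agree e v (Finset.mem_coe.1 hv)

lemma chain_concat {R : Atom → Atom → Prop} : ∀ {L : List Atom} {a b : Atom},
    List.Chain R a L → R ((a :: L).getLast (List.cons_ne_nil a L)) b →
    List.Chain R a (L ++ [b]) := by
  intro L
  induction L with
  | nil => intro a b _ h; exact List.chain_cons.2 ⟨h, List.Chain.nil⟩
  | cons c L ih =>
    intro a b hch hlast
    rcases List.chain_cons.1 hch with ⟨hac, hch'⟩
    refine List.chain_cons.2 ⟨hac, ih hch' ?_⟩
    simpa [List.getLast_cons] using hlast

lemma getLast_cons_concat {a b : Atom} {L : List Atom} :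
    ((a :: (L ++ [b]))).getLast (List.cons_ne_nil _ _) = b := by
  have : a :: (L ++ [b]) = (a :: L) ++ [b] := by simp
  rw [List.getLast_congr _ _ this]
  exact List.getLast_concat

/-- Reachability in the witness-chain graph of an attack by `G`. -/
def Reach (q : Finset Atom) (G H : Atom) : Prop :=
  Relation.ReflTransGen (fun A B => AttackStep q G A B ∧ B ∈ q) G H

lemma reach_chain {q : Finset Atom} {G H : Atom} (h : Reach q G H) :
    ∃ L : List Atom, (∀ X ∈ L, X ∈ q) ∧ List.Chain (AttackStep q G) G L ∧
      (G :: L).getLast (List.cons_ne_nil G L) = H := by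
  induction h with
  | refl => exact ⟨[], by simp, List.Chain.nil, rfl⟩
  | tail hab hbc ih =>
    obtain ⟨L, hLq, hch, hlast⟩ := ih
    refine ⟨L ++ [_], ?_, ?_, getLast_cons_concat⟩
    · intro X hX
      rcases List.mem_append.1 hX with hX | hX
      · exact hLq X hX
      · rcases List.mem_singleton.1 hX with rfl; exact hbc.2
    · exact chain_concat hch (hlast ▸ hbc.1)

lemma reach_of_chain {q : Finset Atom} {G : Atom} : ∀ {L : List Atom} {A : Atom},
    (∀ X ∈ L, X ∈ q) → List.Chain (AttackStep q G) A L →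
    Relation.ReflTransGen (fun X Y => AttackStep q G X Y ∧ Y ∈ q) A
      ((A :: L).getLast (List.cons_ne_nil A L)) := by
  intro L
  induction L with
  | nil => intro A _ _; exact Relation.ReflTransGen.refl
  | cons B L ih =>
    intro A hq' hch
    rcases List.chain_cons.1 hch with ⟨hAB, hch'⟩
    have h1 := ih (fun X hX => hq' X (List.mem_cons_of_mem _ hX)) hch'
    have h2 : ((A :: B :: L).getLast (List.cons_ne_nil _ _)) =
        ((B :: L).getLast (List.cons_ne_nil _ _)) := List.getLast_cons (List.cons_ne_nil _ _)
    rw [h2]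
    exact Relation.ReflTransGen.head ⟨hAB, hq' B List.mem_cons_self⟩ h1

lemma attacksVar_of_reach {q : Finset Atom} {G H : Atom} (hG : G ∈ q) (hreach : Reach q G H)
    {z : ℕ} (hzH : z ∈ atomVars H) (hz : z ∉ plus q G) : AttacksVar q G z := by
  obtain ⟨L, hLq, hch, hlast⟩ := reach_chain hreach
  exact ⟨hz, hG, L, hLq, hch, hlast ▸ hzH⟩

lemma reach_of_attacksVar {q : Finset Atom} {G H : Atom} {z : ℕ} (hH : H ∈ q)
    (hzH : z ∈ atomVars H) (h : AttacksVar q G z) : Reach q G H := by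
  obtain ⟨hz, hG, L, hLq, hch, hzlast⟩ := h
  have h1 : Reach q G ((G :: L).getLast (List.cons_ne_nil G L)) := reach_of_chain hLq hch
  refine h1.tail ⟨?_, hH⟩
  intro hsub
  exact hz (hsub (Finset.mem_coe.2 (Finset.mem_inter.2 ⟨hzlast, hzH⟩)))

/-- The "dontcare" lemma: replacing the relevant fact `applyVal θ G` by a key-equal
fact `B` cannot enable new valuations of `keyVars F`, when no key variable of `F`
is attacked. -/
lemma dontcare {q : Finset Atom} (hq : SJF q) {F : Atom}
    (hind' : ∀ G ∈ q, ∀ z ∈ keyVars F, ¬ AttacksVar q G z)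
    {r : Finset DBFact} (hr : Consistent r) {G : Atom} (hG : G ∈ q)
    {θ : ℕ → ℕ} (hθ : ∀ H ∈ q, applyVal θ H ∈ r)
    {B : DBFact} (hAB : keyEq (applyVal θ G) B)
    {μ : ℕ → ℕ} (hμ : ∀ H ∈ q, applyVal μ H ∈ insert B (r.erase (applyVal θ G))) :
    ∃ μ' : ℕ → ℕ, (∀ v ∈ keyVars F, μ' v = μ v) ∧ ∀ H ∈ q, applyVal μ' H ∈ r := by
  by_cases hB : ∃ H ∈ q, applyVal μ H = B
  · obtain ⟨H₀, hH₀, hH₀B⟩ := hB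
    have hrel : H₀.rel = G.rel := by
      have : (applyVal μ H₀).rel = (applyVal θ G).rel := by rw [hH₀B]; exact hAB.1.symm
      simpa [applyVal] using this
    have hH₀G : H₀ = G := hq H₀ hH₀ G hG hrel
    subst hH₀G
    have hkG : ∀ v ∈ keyVars H₀, θ v = μ v := by
      apply agree_of_key_eq
      rw [show (applyVal μ H₀).key = B.key from by rw [hH₀B]]
      exact hAB.2
    have hμr : ∀ H ∈ q, H ≠ H₀ → applyVal μ H ∈ r := by
      intro H hH hne
      have hmem := hμ H hH
      have hneB : applyVal μ H ≠ B := by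
        intro e
        have : H.rel = H₀.rel := by
          have : (applyVal μ H).rel = (applyVal θ H₀).rel := by rw [e]; exact hAB.1.symm
          simpa [applyVal] using this
        exact hne (hq H hH H₀ hH₀ this)
      rcases Finset.mem_insert.1 hmem with e | hmem
      · exact absurd e hneB
      · exact Finset.mem_of_mem_erase hmem
    have hplus : ∀ z ∈ plus q H₀, θ z = μ z := by
      intro z hz
      refine plus_agree hr (fun H hH => hθ H (Finset.mem_of_mem_erase hH))
        (fun H hH => hμr H (Finset.mem_of_mem_erase hH) (Finset.ne_of_mem_erase hH)) hkG hz
    refine ⟨fun v => if AttacksVar q H₀ v then θ v else μ v, ?_, ?_⟩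
    · intro v hv; simp [hind' H₀ hH₀ v hv]
    · intro H hH
      by_cases hre : Reach q H₀ H
      · have hag : ∀ v ∈ atomVars H, (fun v => if AttacksVar q H₀ v then θ v else μ v) v = θ v := by
          intro v hv
          by_cases hvp : v ∈ plus q H₀
          · have : ¬ AttacksVar q H₀ v := fun hatt => hatt.1 hvp
            simp only [this, if_false, ite_false]
            exact (hplus v hvp).symm
          · simp [attacksVar_of_reach hH₀ hre hv hvp]
        rw [applyVal_congr hag]
        exact hθ H hH
      · have hne : H ≠ H₀ := by rintro rfl; exact hre Relation.ReflTransGen.refl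
        have hag : ∀ v ∈ atomVars H, (fun v => if AttacksVar q H₀ v then θ v else μ v) v = μ v := by
          intro v hv
          exact if_neg (fun hatt => hre (reach_of_attacksVar hH hv hatt))
        rw [applyVal_congr hag]
        exact hμr H hH hne
  · refine ⟨μ, fun _ _ => rfl, fun H hH => ?_⟩
    have hmem := hμ H hH
    have hne : applyVal μ H ≠ B := fun e => hB ⟨H, hH, e⟩
    rcases Finset.mem_insert.1 hmem with e | hmem
    · exact absurd e hne
    · exact Finset.mem_of_mem_erase hmem

lemma repair_of_cover {db r : Finset DBFact} (hsub : r ⊆ db) (hc : Consistent r)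
    (hcov : ∀ C ∈ db, ∃ A ∈ r, keyEq A C) : Repair db r := by
  refine ⟨hsub, hc, fun r' hr'db hr'c hrr' => ?_⟩
  refine Finset.Subset.antisymm hrr' (fun C hC => ?_)
  obtain ⟨A, hA, hk⟩ := hcov C (hr'db hC)
  have : A = C := hr'c A (hrr' hA) C hC hk
  exact this ▸ hA

lemma cover_of_repair {db r : Finset DBFact} (h : Repair db r) :
    ∀ C ∈ db, ∃ A ∈ r, keyEq A C := by
  intro C hC
  by_cases hex : ∃ A ∈ r, keyEq A C
  · exact hex
  · exfalso
    have hcons : Consistent (insert C r) := by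
      intro X hX Y hY hk
      rcases Finset.mem_insert.1 hX with hX | hX
      · rcases Finset.mem_insert.1 hY with hY | hY
        · rw [hX, hY]
        · exact absurd ⟨Y, hY, keyEq_symm (by rw [← hX]; exact hk)⟩ hex
      · rcases Finset.mem_insert.1 hY with hY | hY
        · exact absurd ⟨X, hX, by rw [← hY]; exact hk⟩ hex
        · exact h.2.1 X hX Y hY hk
    have : r = insert C r := h.2.2 _ (Finset.insert_subset hC h.1) hcons (Finset.subset_insert _ _)
    have hCr : C ∈ r := this ▸ Finset.mem_insert_self C r
    exact hex ⟨C, hCr, keyEq_refl C⟩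

lemma swap_repair {db r : Finset DBFact} (h : Repair db r) {A B : DBFact}
    (hA : A ∈ r) (hB : B ∈ db) (hk : keyEq A B) : Repair db (insert B (r.erase A)) := by
  refine repair_of_cover ?_ ?_ ?_
  · exact Finset.insert_subset hB ((Finset.erase_subset _ _).trans h.1)
  · intro X hX Y hY hkXY
    rcases Finset.mem_insert.1 hX with hXB | hX
    · rcases Finset.mem_insert.1 hY with hYB | hY
      · rw [hXB, hYB]
      · exfalso
        have h1 : keyEq A Y := keyEq_trans hk (by rw [← hXB]; exact hkXY)
        have h2 : A = Y := h.2.1 A hA Y (Finset.mem_of_mem_erase hY) h1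
        exact (Finset.mem_erase.1 hY).1 h2.symm
    · rcases Finset.mem_insert.1 hY with hYB | hY
      · exfalso
        have h1 : keyEq A X := keyEq_trans hk (keyEq_symm (by rw [← hYB]; exact hkXY))
        have h2 : A = X := h.2.1 A hA X (Finset.mem_of_mem_erase hX) h1
        exact (Finset.mem_erase.1 hX).1 h2.symm
      · exact h.2.1 X (Finset.mem_of_mem_erase hX) Y (Finset.mem_of_mem_erase hY) hkXY
  · intro C hC
    obtain ⟨A', hA', hk'⟩ := cover_of_repair h C hC
    by_cases hAA : A' = A
    · subst hAA
      exact ⟨B, Finset.mem_insert_self _ _, keyEq_trans (keyEq_symm hk) hk'⟩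
    · exact ⟨A', Finset.mem_insert_of_mem (Finset.mem_erase.2 ⟨hAA, hA'⟩), hk'⟩

lemma exists_repair (db : Finset DBFact) : ∃ r, Repair db r := by
  obtain ⟨r, hr, hmax⟩ := Finset.exists_maximal
    (s := db.powerset.filter fun t => Consistent t) ⟨∅, by
      simp only [Finset.mem_filter, Finset.mem_powerset]
      exact ⟨Finset.empty_subset db, fun A hA => absurd hA (Finset.notMem_empty A)⟩⟩
  simp only [Finset.mem_filter, Finset.mem_powerset] at hr
  refine ⟨r, hr.1, hr.2, fun r' hr'db hr'c hrr' => ?_⟩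
  by_contra hne
  exact hne (le_antisymm hrr' (hmax (Finset.mem_filter.2 ⟨Finset.mem_powerset.2 hr'db, hr'c⟩)
    hrr'))

/-- The set of key tuples of `F` realized by valuations satisfying `q` in `r`. -/
noncomputable def KeySet (q : Finset Atom) (F : Atom) (r : Finset DBFact) : Finset (List ℕ) :=
  (r.filter fun A => ∃ θ : ℕ → ℕ, (∀ H ∈ q, applyVal θ H ∈ r) ∧ applyVal θ F = A).image DBFact.key

lemma mem_KeySet {q : Finset Atom} {F : Atom} (hF : F ∈ q) {r : Finset DBFact} {l : List ℕ} :
    l ∈ KeySet q F r ↔ ∃ θ : ℕ → ℕ, (∀ H ∈ q, applyVal θ H ∈ r) ∧ (applyVal θ F).key = l := by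
  constructor
  · intro h
    obtain ⟨A, hA, hAl⟩ := Finset.mem_image.1 h
    obtain ⟨_, θ, hθ, hθA⟩ := Finset.mem_filter.1 hA
    exact ⟨θ, hθ, by rw [hθA, hAl]⟩
  · rintro ⟨θ, hθ, hl⟩
    exact Finset.mem_image.2 ⟨applyVal θ F,
      Finset.mem_filter.2 ⟨hθ F hF, θ, hθ, rfl⟩, hl⟩

lemma keySet_swap_subset {q : Finset Atom} (hq : SJF q) {F : Atom} (hF : F ∈ q)
    (hind' : ∀ G ∈ q, ∀ z ∈ keyVars F, ¬ AttacksVar q G z)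
    {r : Finset DBFact} (hrc : Consistent r) {G : Atom} (hG : G ∈ q)
    {θ : ℕ → ℕ} (hθ : ∀ H ∈ q, applyVal θ H ∈ r)
    {B : DBFact} (hAB : keyEq (applyVal θ G) B) :
    KeySet q F (insert B (r.erase (applyVal θ G))) ⊆ KeySet q F r := by
  intro l hl
  rw [mem_KeySet hF] at hl ⊢
  obtain ⟨μ, hμ, hkey⟩ := hl
  obtain ⟨μ', hag, hμ'⟩ := dontcare hq hind' hrc hG hθ hAB hμ
  refine ⟨μ', hμ', ?_⟩
  rw [← hkey]
  exact (keyEq_applyVal_of_agree hag).2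

lemma descent_step {q : Finset Atom} (hq : SJF q) {F : Atom} (hF : F ∈ q)
    (hind' : ∀ G ∈ q, ∀ z ∈ keyVars F, ¬ AttacksVar q G z)
    {db r₁ : Finset DBFact} (hr₁ : Repair db r₁) {l : List ℕ} (hl₁ : l ∉ KeySet q F r₁)
    {r : Finset DBFact} (hr : Repair db r) (hmem : l ∈ KeySet q F r) :
    ∃ r', Repair db r' ∧ KeySet q F r' ⊆ KeySet q F r ∧
      (r' \ r₁).card < (r \ r₁).card := by
  obtain ⟨θ, hθ, hkey⟩ := (mem_KeySet hF).1 hmem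
  have hGex : ∃ G ∈ q, applyVal θ G ∉ r₁ := by
    by_contra hall
    push_neg at hall
    exact hl₁ ((mem_KeySet hF).2 ⟨θ, hall, hkey⟩)
  obtain ⟨G, hG, hGr₁⟩ := hGex
  set A := applyVal θ G with hAdef
  have hAr : A ∈ r := hθ G hG
  have hAdb : A ∈ db := hr.1 hAr
  obtain ⟨B, hBr₁, hkBA⟩ := cover_of_repair hr₁ A hAdb
  have hkAB : keyEq A B := keyEq_symm hkBA
  have hBdb : B ∈ db := hr₁.1 hBr₁
  refine ⟨insert B (r.erase A), swap_repair hr hAr hBdb hkAB,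
    keySet_swap_subset hq hF hind' hr.2.1 hG hθ hkAB, ?_⟩
  have hsub : (insert B (r.erase A)) \ r₁ ⊆ (r \ r₁).erase A := by
    intro X hX
    rcases Finset.mem_sdiff.1 hX with ⟨hX1, hX2⟩
    have hXB : X ≠ B := fun e => hX2 (e ▸ hBr₁)
    rcases Finset.mem_insert.1 hX1 with rfl | hX1
    · exact absurd rfl hXB
    · exact Finset.mem_erase.2 ⟨(Finset.mem_erase.1 hX1).1,
        Finset.mem_sdiff.2 ⟨Finset.mem_of_mem_erase hX1, hX2⟩⟩
  have hAmem : A ∈ r \ r₁ := Finset.mem_sdiff.2 ⟨hAr, hGr₁⟩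
  exact lt_of_le_of_lt (Finset.card_le_card hsub) (Finset.card_erase_lt_of_mem hAmem)

lemma descent {q : Finset Atom} (hq : SJF q) {F : Atom} (hF : F ∈ q)
    (hind' : ∀ G ∈ q, ∀ z ∈ keyVars F, ¬ AttacksVar q G z)
    {db r₁ : Finset DBFact} (hr₁ : Repair db r₁) {l : List ℕ} (hl₁ : l ∉ KeySet q F r₁) :
    ∀ n (r : Finset DBFact), Repair db r → (r \ r₁).card ≤ n →
      ∃ r', Repair db r' ∧ KeySet q F r' ⊆ KeySet q F r ∧ l ∉ KeySet q F r' := by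
  intro n
  induction n with
  | zero =>
    intro r hr hcard
    by_cases hmem : l ∈ KeySet q F r
    · obtain ⟨r', _, _, hlt⟩ := descent_step hq hF hind' hr₁ hl₁ hr hmem
      omega
    · exact ⟨r, hr, Finset.Subset.refl _, hmem⟩
  | succ n ih =>
    intro r hr hcard
    by_cases hmem : l ∈ KeySet q F r
    · obtain ⟨r', hr', hsub, hlt⟩ := descent_step hq hF hind' hr₁ hl₁ hr hmem
      obtain ⟨r'', hr'', hsub', hl''⟩ := ih r' hr' (by omega)
      exact ⟨r'', hr'', hsub'.trans hsub, hl''⟩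
    · exact ⟨r, hr, Finset.Subset.refl _, hmem⟩

/-- If `F` has zero indegree in the attack graph of `q`, then `q` is true in every
repair of `db` iff for some tuple of active-domain constants substituted for the key
variables of `F`, the instantiated query is true in every repair of `db`. -/
theorem reify_unattacked_atom (q : Finset Atom) (hq : SJF q) (F : Atom) (hF : F ∈ q)
    (hind : ∀ G ∈ q, ¬ Attacks q G F) (db : Finset DBFact) :
    (∀ r, Repair db r → Sat0 r q) ↔
    (∃ ζ : ℕ → ℕ, (∀ v ∈ keyVars F, ζ v ∈ adom db) ∧
      ∀ r, Repair db r → Sat r q (keyVars F) ζ) := by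
  constructor
  · intro hall
    have hind' : ∀ G ∈ q, ∀ z ∈ keyVars F, ¬ AttacksVar q G z := by
      intro G hG z hz hatt
      by_cases hGF : G = F
      · subst hGF
        exact hatt.1 (keyVars_subset_plus hz)
      · apply hind G hG
        obtain ⟨hzp, hGq, L, hLq, hch, hzlast⟩ := hatt
        refine ⟨hGF, hGq, L ++ [F], ?_, ?_, getLast_cons_concat⟩
        · intro X hX
          rcases List.mem_append.1 hX with hX | hX
          · exact hLq X hX
          · rcases List.mem_singleton.1 hX with rfl; exact hF
        · refine chain_concat hch ?_
          intro hsub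
          refine hzp (hsub (Finset.mem_coe.2 (Finset.mem_inter.2 ⟨hzlast, ?_⟩)))
          exact Finset.mem_union_left _ hz
    obtain ⟨rex, hrex⟩ := exists_repair db
    have hRne : (db.powerset.filter fun r => Repair db r).Nonempty :=
      ⟨rex, Finset.mem_filter.2 ⟨Finset.mem_powerset.2 hrex.1, hrex⟩⟩
    obtain ⟨r₀, hr₀R, hr₀min⟩ := Finset.exists_min_image _ (fun r => (KeySet q F r).card) hRne
    have hr₀ : Repair db r₀ := (Finset.mem_filter.1 hr₀R).2
    obtain ⟨θ₀, hθ₀⟩ := hall r₀ hr₀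
    have hl₀ : (applyVal θ₀ F).key ∈ KeySet q F r₀ := (mem_KeySet hF).2 ⟨θ₀, hθ₀, rfl⟩
    refine ⟨θ₀, ?_, ?_⟩
    · intro v hv
      refine ⟨applyVal θ₀ F, hr₀.1 (hθ₀ F hF), Or.inl ?_⟩
      have : Sum.inl v ∈ F.key := mem_termVars.1 hv
      simpa [applyVal] using List.mem_map_of_mem (f := Sum.elim θ₀ id) this
    · intro r₁ hrep₁
      have hmem : (applyVal θ₀ F).key ∈ KeySet q F r₁ := by
        by_contra hl₁
        obtain ⟨r', hr', hsub, hl'⟩ :=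
          descent hq hF hind' hrep₁ hl₁ ((r₀ \ r₁).card) r₀ hr₀ le_rfl
        have hss : KeySet q F r' ⊂ KeySet q F r₀ :=
          ⟨hsub, fun hss => hl' (hss hl₀)⟩
        have hlt : (KeySet q F r').card < (KeySet q F r₀).card := Finset.card_lt_card hss
        exact absurd (hr₀min r' (Finset.mem_filter.2 ⟨Finset.mem_powerset.2 hr'.1, hr'⟩))
          (not_le.2 hlt)
      obtain ⟨μ, hμ, hkey⟩ := (mem_KeySet hF).1 hmem
      exact ⟨μ, fun v hv => map_elim_agree hkey v hv, hμ⟩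
  · rintro ⟨ζ, _, h⟩ r hr
    obtain ⟨θ, _, hθ⟩ := h r hr
    exact ⟨θ, hθ⟩
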